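/- Let L ≥ 1 be an integer and define G(ω) = Σ_{k=0}^{L} cos(π(k/L − 1/2)) e^{2πi k ω}. Then for every ω ∈ [0, 1/2] with 4L²ω² ≠ 1, |G(ω)| ≤ (2/π)·L/|1 − 4L²ω²| + 8/(πL). -/

import Mathlib

open scoped Real
open Finset

/-- `G(ω) = Σ_{k=0}^{L} cos(π(k/L − 1/2)) e^{2πi k ω}`. -/
noncomputable def Gfun (L : ℕ) (ω : ℝ) : ℂ :=
  ∑ k ∈ Finset.range (L + 1),
    (Real.cos (Real.pi * ((k : ℝ) / L - 1 / 2)) : ℂ) *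
      Complex.exp (2 * Real.pi * Complex.I * (k : ℂ) * (ω : ℂ))

section Auxiliary

lemma aux_nonneg' {f f' : ℝ → ℝ} {b x : ℝ}
    (hd : ∀ y, HasDerivAt f (f' y) y) (h0 : f 0 = 0)
    (hf' : ∀ y ∈ Set.Icc (0:ℝ) b, 0 ≤ f' y)
    (hx : x ∈ Set.Icc (0:ℝ) b) : 0 ≤ f x := by
  have hb : (0:ℝ) ≤ b := hx.1.trans hx.2
  have hmono : MonotoneOn f (Set.Icc (0:ℝ) b) := by
    apply monotoneOn_of_deriv_nonneg (convex_Icc (0:ℝ) b)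
    · exact fun y _ => (hd y).continuousAt.continuousWithinAt
    · exact fun y _ => (hd y).differentiableAt.differentiableWithinAt
    · intro y hy
      rw [(hd y).deriv]
      rw [interior_Icc] at hy
      exact hf' y ⟨hy.1.le, hy.2.le⟩
  have := hmono (Set.left_mem_Icc.2 hb) hx hx.1
  rw [h0] at this
  exact this

lemma sin_ge_cubic' {x : ℝ} (hx : 0 ≤ x) : x - x^3/6 ≤ Real.sin x := by
  have hd : ∀ y : ℝ, HasDerivAt (fun y => Real.sin y - (y - y^3/6))
      (Real.cos y - (1 - y^2/2)) y := by
    intro y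
    have h2 : HasDerivAt (fun y : ℝ => y - y^3/6) (1 - y^2/2) y := by
      have h3 := (hasDerivAt_pow 3 y).div_const 6
      have h4 := (hasDerivAt_id y).sub h3
      refine h4.congr_deriv ?_
      norm_num
      ring
    exact (Real.hasDerivAt_sin y).sub h2
  have := aux_nonneg' (b := x) hd (by norm_num)
    (fun y _ => by nlinarith [Real.one_sub_sq_div_two_le_cos (x := y)])
    (Set.mem_Icc.2 ⟨hx, le_refl x⟩)
  linarith

lemma mul_cos_le_sin' {x : ℝ} (hx : 0 ≤ x) (hx' : x ≤ π) : x * Real.cos x ≤ Real.sin x := by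
  have hd : ∀ y : ℝ, HasDerivAt (fun y => Real.sin y - y * Real.cos y)
      (y * Real.sin y) y := by
    intro y
    have h2 := (hasDerivAt_id y).mul (Real.hasDerivAt_cos y)
    have h4 := (Real.hasDerivAt_sin y).sub h2
    refine h4.congr_deriv ?_
    simp
  have := aux_nonneg' (b := π) hd (by norm_num)
    (fun y hy => mul_nonneg hy.1 (Real.sin_nonneg_of_nonneg_of_le_pi hy.1 hy.2))
    (Set.mem_Icc.2 ⟨hx, hx'⟩)
  linarith

lemma key_id (φ : ℝ) (z : ℂ) : ∀ n : ℕ,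
    (1 - 2*(Real.cos φ : ℂ)*z + z^2) * ∑ k ∈ Finset.range (n+1), ((Real.sin ((k:ℝ)*φ) : ℝ) : ℂ) * z^k
      = (Real.sin φ : ℂ)*z - ((Real.sin (((n:ℝ)+1)*φ) : ℝ) : ℂ)*z^(n+1)
        + ((Real.sin ((n:ℝ)*φ) : ℝ):ℂ)*z^(n+2) := by
  intro n
  induction n with
  | zero => simp [Finset.sum_range_one]
  | succ n ih =>
    rw [Finset.sum_range_succ, mul_add, ih]
    have hrec : Real.sin (((n:ℝ)+1+1)*φ)
        = 2*Real.cos φ * Real.sin (((n:ℝ)+1)*φ) - Real.sin ((n:ℝ)*φ) := by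
      rw [show ((n:ℝ)+1+1)*φ = (((n:ℝ)+1)*φ)+φ by ring,
        show (n:ℝ)*φ = (((n:ℝ)+1)*φ)-φ by ring, Real.sin_add, Real.sin_sub]
      ring
    have h2 : ((Real.sin (((n:ℝ)+1+1)*φ) : ℝ) : ℂ)
        = 2*(Real.cos φ:ℂ)*((Real.sin (((n:ℝ)+1)*φ):ℝ):ℂ) - ((Real.sin ((n:ℝ)*φ):ℝ):ℂ) := by
      rw [hrec]; push_cast; ring
    push_cast
    push_cast at h2
    linear_combination z^(n+2) * h2

lemma Gfun_eq' (L : ℕ) (ω : ℝ) :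
    Gfun L ω = ∑ k ∈ Finset.range (L+1),
      ((Real.sin ((k:ℝ)*(π/L)) : ℝ) : ℂ) * (Complex.exp ((2*π*ω : ℝ) * Complex.I))^k := by
  unfold Gfun
  refine Finset.sum_congr rfl fun k _ => ?_
  congr 1
  · rw [show π * ((k:ℝ)/L - 1/2) = (k:ℝ)*(π/L) - π/2 by ring, Real.cos_sub_pi_div_two]
  · rw [← Complex.exp_nat_mul]
    congr 1
    push_cast
    ring

lemma G_bound' (L : ℕ) (hL : 1 ≤ L) (ω : ℝ)
    (hne : Real.cos (2*π*ω) ≠ Real.cos (π/L)) :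
    ‖Gfun L ω‖ ≤ Real.sin (π/L) / |Real.cos (2*π*ω) - Real.cos (π/L)| := by
  have hL0 : (L:ℝ) ≠ 0 := Nat.cast_ne_zero.2 (by omega)
  set θ : ℝ := 2*π*ω with hθ
  set z : ℂ := Complex.exp ((θ : ℝ) * Complex.I) with hzdef
  set Δ : ℝ := Real.cos θ - Real.cos (π/L) with hΔdef
  have hΔ0 : Δ ≠ 0 := sub_ne_zero.mpr hne
  have habsz : ‖z‖ = 1 := Complex.norm_exp_ofReal_mul_I _
  have hsφ : 0 ≤ Real.sin (π/L) :=
    Real.sin_nonneg_of_nonneg_of_le_pi (by positivity)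
      (div_le_self Real.pi_pos.le (Nat.one_le_cast.mpr hL))
  have hexp : z * Complex.exp (-(θ:ℂ)*Complex.I) = 1 := by
    rw [hzdef, ← Complex.exp_add,
      show (θ:ℂ)*Complex.I + -(θ:ℂ)*Complex.I = 0 by ring, Complex.exp_zero]
  have h1 : z * (2*(Real.cos θ : ℂ)) = 1 + z^2 := by
    rw [Complex.ofReal_cos, Complex.two_cos, ← hzdef, mul_add, hexp]
    ring
  have hD : (1 : ℂ) - 2*(Real.cos (π/L):ℂ)*z + z^2 = z * ((2*Δ : ℝ) : ℂ) := by
    have hc : ((2*Δ : ℝ) : ℂ) = 2*(Real.cos θ:ℂ) - 2*(Real.cos (π/L):ℂ) := by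
      rw [hΔdef]; push_cast; ring
    rw [hc]
    linear_combination -h1
  have hkey := key_id (π/L) z L
  have e2 : ((L:ℝ)+1)*(π/L) = π + π/L := by field_simp
  have e1 : (L:ℝ)*(π/L) = π := by field_simp
  have e3 : Real.sin (π + π/(L:ℝ)) = -Real.sin (π/L) := by rw [Real.sin_add]; simp
  rw [e2, e3, e1, Real.sin_pi] at hkey
  rw [Complex.ofReal_neg, Complex.ofReal_zero] at hkey
  have hzne : z ≠ 0 := Complex.exp_ne_zero _
  have heq : ((2*Δ : ℝ):ℂ) * (Gfun L ω) = (Real.sin (π/L) : ℂ) * (1 + z^L) := by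
    rw [Gfun_eq', ← hθ, ← hzdef]
    apply mul_left_cancel₀ hzne
    linear_combination hkey
      - (∑ k ∈ Finset.range (L+1), ((Real.sin ((k:ℝ)*(π/L)) : ℝ) : ℂ) * z^k) * hD
  have habs := congrArg norm heq
  rw [norm_mul, norm_mul, Complex.norm_real, Complex.norm_real, Real.norm_eq_abs, Real.norm_eq_abs] at habs
  have h1z : ‖1 + z^L‖ ≤ 2 := by
    calc ‖1 + z^L‖ ≤ ‖(1:ℂ)‖ + ‖z^L‖ := norm_add_le _ _
    _ = 2 := by rw [norm_one, norm_pow, habsz, one_pow]; norm_num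
  rw [abs_of_nonneg hsφ] at habs
  have hΔpos : 0 < |Δ| := abs_pos.2 hΔ0
  rw [le_div_iff₀ hΔpos]
  have h2 : |2*Δ| = 2*|Δ| := by rw [abs_mul]; norm_num
  nlinarith [norm_nonneg (Gfun L ω), habs, h1z, hsφ, hΔpos, h2,
    norm_nonneg (1 + z^L)]

lemma G_trivial' (L : ℕ) (hL : 1 ≤ L) (ω : ℝ) :
    ‖Gfun L ω‖ ≤ 2*(L:ℝ)/π := by
  have hL0 : (0:ℝ) < (L:ℝ) := by exact_mod_cast hL
  have hpi := Real.pi_pos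
  set S : ℝ := ∑ k ∈ Finset.range (L+1), Real.sin ((k:ℝ)*(π/L)) with hS
  have h1 : ‖Gfun L ω‖ ≤ S := by
    rw [Gfun_eq', hS]
    refine (norm_sum_le _ _).trans (le_of_eq (Finset.sum_congr rfl fun k hk => ?_))
    rw [norm_mul, Complex.norm_real, Real.norm_eq_abs, norm_pow, Complex.norm_exp_ofReal_mul_I, one_pow, mul_one]
    apply abs_of_nonneg
    apply Real.sin_nonneg_of_nonneg_of_le_pi (by positivity)
    have hk' : (k:ℝ) ≤ L := by exact_mod_cast Nat.lt_succ_iff.mp (Finset.mem_range.mp hk)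
    calc (k:ℝ)*(π/L) ≤ (L:ℝ)*(π/L) := by
          apply mul_le_mul_of_nonneg_right hk' (by positivity)
      _ = π := by field_simp
  have hkey := key_id (π/L) 1 L
  have e2 : ((L:ℝ)+1)*(π/L) = π + π/L := by field_simp
  have e1 : (L:ℝ)*(π/L) = π := by field_simp
  have e3 : Real.sin (π + π/(L:ℝ)) = -Real.sin (π/L) := by rw [Real.sin_add]; simp
  rw [e2, e3, e1, Real.sin_pi] at hkey
  simp only [one_pow, mul_one] at hkey
  rw [Complex.ofReal_neg, Complex.ofReal_zero] at hkey
  have hsum : ((2 - 2*Real.cos (π/L)) * S : ℝ) = 2 * Real.sin (π/L) := by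
    apply Complex.ofReal_injective
    simp only [Complex.ofReal_mul, Complex.ofReal_sub, Complex.ofReal_ofNat, hS,
      Complex.ofReal_sum]
    linear_combination hkey
  set x : ℝ := π/(2*L) with hx
  have hx0 : 0 < x := by positivity
  have h2L : (2:ℝ) ≤ 2*L := by nlinarith [show (1:ℝ) ≤ L from by exact_mod_cast hL]
  have hxpi : x ≤ π/2 := by
    rw [hx]
    exact div_le_div_of_nonneg_left hpi.le two_pos h2L
  have hsin2 : Real.sin (π/L) = 2 * Real.sin x * Real.cos x := by
    rw [show π/(L:ℝ) = 2*x by rw [hx]; field_simp, Real.sin_two_mul]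
  have hcos2 : Real.cos (π/L) = 2 * Real.cos x ^ 2 - 1 := by
    rw [show π/(L:ℝ) = 2*x by rw [hx]; field_simp, Real.cos_two_mul]
  have hpyth := Real.sin_sq_add_cos_sq x
  have hsx : 0 < Real.sin x := Real.sin_pos_of_pos_of_lt_pi hx0 (by nlinarith)
  have htan := mul_cos_le_sin' hx0.le (by nlinarith)
  have hScos : S * Real.sin x = Real.cos x := by
    have h4 : (4 * Real.sin x ^ 2) * S = 4 * Real.sin x * Real.cos x := by
      rw [hsin2, hcos2] at hsum
      linear_combination hsum + 4*S*hpyth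
    exact mul_left_cancel₀ (a := 4 * Real.sin x) (by positivity)
      (by linear_combination h4)
  have hgoal : S ≤ 1/x := by
    rw [le_div_iff₀ hx0]
    have hkey2 : (S*x)*Real.sin x ≤ 1*Real.sin x := by
      calc (S*x)*Real.sin x = x*(S*Real.sin x) := by ring
        _ = x*Real.cos x := by rw [hScos]
        _ ≤ Real.sin x := htan
        _ = 1*Real.sin x := by ring
    exact le_of_mul_le_mul_right hkey2 hsx
  calc ‖Gfun L ω‖ ≤ S := h1
    _ ≤ 1/x := hgoal
    _ = 2*(L:ℝ)/π := by rw [hx]; field_simp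

lemma qw_ineq {q w : ℝ} (hq0 : 0 ≤ q) (hw0 : 0 < w) (hw : w ≤ 1/4) (h1 : q ≤ 4*w)
    (h2 : q ≤ 1/9) (h3 : q ≤ (1/2-2*w)^2) :
    1 ≤ (1+16*w)*(1 - (9.9225/6)*(q+2*w) + (9.9225/6)^2*w^2) := by
  rcases le_or_gt w (1/36) with hcase | hcase
  · nlinarith [mul_le_mul_of_nonneg_left h1 (show (0:ℝ) ≤ (9.9225/6)*(1+16*w) by nlinarith),
      mul_pos hw0 hw0, mul_nonneg (mul_nonneg hw0.le hw0.le) hw0.le, hcase,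
      mul_le_mul_of_nonneg_left hcase hw0.le]
  · rcases le_or_gt w (1/12) with hcase2 | hcase2
    · nlinarith [mul_le_mul_of_nonneg_left h2 (show (0:ℝ) ≤ (9.9225/6)*(1+16*w) by nlinarith),
        mul_pos hw0 hw0, mul_nonneg (mul_nonneg hw0.le hw0.le) hw0.le,
        mul_nonneg (sub_nonneg.2 hcase.le) (sub_nonneg.2 hcase2)]
    · nlinarith [mul_le_mul_of_nonneg_left h3 (show (0:ℝ) ≤ (9.9225/6)*(1+16*w) by nlinarith),
        mul_pos hw0 hw0, mul_nonneg (mul_nonneg hw0.le hw0.le) hw0.le,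
        mul_nonneg (sub_nonneg.2 hcase2.le) (sub_nonneg.2 hw)]

set_option maxHeartbeats 1000000 in
lemma ineq_a' {u v : ℝ} (hv : 0 < v) (hvu : v ≤ u) (hu : u ≤ 1/2) (hd : u - v ≤ 1/3)
    (hc : (u-v)^2 ≤ 4*(u*v)) :
    π^2*(u*v) ≤ (1+16*(u*v)) * (Real.sin (π*u) * Real.sin (π*v)) := by
  have hu0 : 0 < u := hv.trans_le hvu
  have hπ2 : π < 3.15 := Real.pi_lt_d2
  have hπ1 : (3.14:ℝ) < π := Real.pi_gt_d2
  have h16 : (0:ℝ) ≤ 1+16*(u*v) := by nlinarith [mul_pos hu0 hv]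
  have ha := sin_ge_cubic' (x := π*u) (by positivity)
  have hb := sin_ge_cubic' (x := π*v) (by positivity)
  have hπv : 0 < π*v := by positivity
  have hπvle : π*v ≤ 1.575 := by nlinarith
  have hsqv : (π*v)^2 ≤ 2.49 := by nlinarith [mul_le_mul_of_nonneg_left hπvle hπv.le]
  have hpb : 0 ≤ π*v - (π*v)^3/6 := by nlinarith [mul_le_mul_of_nonneg_left hsqv hπv.le]
  have hsa : 0 ≤ Real.sin (π*u) := Real.sin_nonneg_of_nonneg_of_le_pi (by positivity)
    (by nlinarith)
  have hmul : (π*u - (π*u)^3/6) * (π*v - (π*v)^3/6) ≤ Real.sin (π*u) * Real.sin (π*v) :=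
    mul_le_mul ha hb hpb hsa
  have hq : 1 ≤ (1+16*(u*v))*(1 - (9.9225/6)*((u-v)^2+2*(u*v)) + (9.9225/6)^2*(u*v)^2) := by
    apply qw_ineq (sq_nonneg _) (mul_pos hu0 hv) (by nlinarith) hc (by nlinarith)
    have h5 : u - v ≤ 1/2 - 2*(u*v) := by nlinarith
    have h6 : (0:ℝ) ≤ u - v := by linarith
    nlinarith [sq_nonneg (u-v)]
  have h7 : 1 - (9.9225/6)*((u-v)^2+2*(u*v)) + (9.9225/6)^2*(u*v)^2
      ≤ (1 - π^2*u^2/6) * (1 - π^2*v^2/6) := by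
    have e2 : (1 - π^2*u^2/6) * (1 - π^2*v^2/6)
        = 1 - (π^2/6)*((u-v)^2+2*(u*v)) + (π^2/6)^2*(u*v)^2 := by ring
    rw [e2]
    have hδ : (0:ℝ) ≤ 9.9225/6 - π^2/6 := by nlinarith
    have hq0 : (0:ℝ) ≤ (u-v)^2 := sq_nonneg _
    have hw0 : 0 < u*v := mul_pos hu0 hv
    have hw4 : u*v ≤ 1/4 := by nlinarith
    have hmain : 0 ≤ (u-v)^2 + 2*(u*v) - (9.9225/6 + π^2/6)*(u*v)^2 := by
      nlinarith [mul_le_mul_of_nonneg_left hw4 hw0.le]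
    nlinarith [mul_nonneg hδ hmain]
  have hX : 1 ≤ (1+16*(u*v)) * ((1 - π^2*u^2/6) * (1 - π^2*v^2/6)) :=
    hq.trans (mul_le_mul_of_nonneg_left h7 h16)
  have hfin : π^2*(u*v) ≤ (1+16*(u*v)) * ((π*u - (π*u)^3/6) * (π*v - (π*v)^3/6)) := by
    calc π^2*(u*v) = π^2*(u*v) * 1 := by ring
      _ ≤ π^2*(u*v) * ((1+16*(u*v)) * ((1 - π^2*u^2/6) * (1 - π^2*v^2/6))) :=
          mul_le_mul_of_nonneg_left hX (by positivity)
      _ = (1+16*(u*v)) * ((π*u - (π*u)^3/6) * (π*v - (π*v)^3/6)) := by ring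
  exact hfin.trans (mul_le_mul_of_nonneg_left hmul h16)

set_option maxHeartbeats 2000000 in
lemma ineq_b' {u v : ℝ} (L : ℕ) (hL : 3 ≤ L) (hv : 0 < v) (hd : u - v = 1/(L:ℝ))
    (hu : 1/2 ≤ u) (hsum : u + v ≤ 1) :
    π^2*(u*v) ≤ (1+16*(u*v)) * (Real.sin (π*u) * Real.sin (π*v)) := by
  have hπ2 : π < 3.15 := Real.pi_lt_d2
  have hπ1 : (3.14:ℝ) < π := Real.pi_gt_d2
  have hL3 : (3:ℝ) ≤ (L:ℝ) := by exact_mod_cast hL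
  have hdle : u - v ≤ 1/3 := by rw [hd]; rw [div_le_div_iff₀ (by linarith) (by norm_num)]; linarith
  have hd0 : 0 < u - v := by rw [hd]; positivity
  have huv0 : 0 < u*v := mul_pos (by linarith) hv
  have h16 : (0:ℝ) ≤ 1+16*(u*v) := by nlinarith
  have hprod : Real.sin (π*u) * Real.sin (π*v)
      = (Real.cos (π*(u-v)) - Real.cos (π*(u+v)))/2 := by
    rw [show π*(u-v) = π*u - π*v by ring, show π*(u+v) = π*u + π*v by ring,
      Real.cos_sub, Real.cos_add]
    ring
  have hcos : Real.cos (π*(u+v)) ≤ -Real.cos (π*(u-v)) := by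
    have h := Real.cos_le_cos_of_nonneg_of_le_pi (x := π*(1-(u-v))) (y := π*(u+v))
      (by nlinarith [Real.pi_pos]) (by nlinarith [Real.pi_pos]) (by nlinarith [Real.pi_pos])
    rwa [show π*(1-(u-v)) = π - π*(u-v) by ring, Real.cos_pi_sub] at h
  have hab : Real.cos (π*(u-v)) ≤ Real.sin (π*u) * Real.sin (π*v) := by
    rw [hprod]; linarith
  have hsum0 : (0:ℝ) ≤ u + v := by linarith
  have huv4 : u*v ≤ (1 - (u-v)^2)/4 := by nlinarith [sq_nonneg (u+v)]
  have key2 : π^2*(u*v) ≤ (1+16*(u*v)) * Real.cos (π*(u-v)) := by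
    rcases eq_or_lt_of_le hL with hL4 | hL4
    · have hthird : u - v = 1/3 := by rw [hd, ← hL4]; norm_num
      rw [hthird, show π*(1/3 : ℝ) = π/3 by ring, Real.cos_pi_div_three]
      have huv9 : u*v ≤ 2/9 := by rw [hthird] at huv4; nlinarith
      have hπsq : π^2 ≤ 9.9225 := by nlinarith
      nlinarith [mul_le_mul_of_nonneg_right hπsq huv0.le]
    · have hL4' : (4:ℝ) ≤ (L:ℝ) := by exact_mod_cast hL4
      have hd4 : u - v ≤ 1/4 := by
        rw [hd, div_le_div_iff₀ (by linarith) (by norm_num)]; linarith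
      have hcosge : π^2/16 ≤ Real.cos (π*(u-v)) := by
        have h1 := Real.one_sub_sq_div_two_le_cos (x := π*(u-v))
        have h2 : π*(u-v) ≤ 3.15/4 := by nlinarith
        have h3 : 0 < π*(u-v) := by positivity
        have hπsq : π^2 ≤ 9.9225 := by nlinarith
        nlinarith [mul_le_mul_of_nonneg_left h2 h3.le]
      have hp2 : (0:ℝ) < π^2 := by positivity
      have hcnn : 0 ≤ Real.cos (π*(u-v)) := by linarith
      have hprod2 := mul_le_mul_of_nonneg_left hcosge
        (show (0:ℝ) ≤ 16*(u*v) by positivity)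
      nlinarith [hprod2, hcnn]
  calc π^2*(u*v) ≤ (1+16*(u*v)) * Real.cos (π*(u-v)) := key2
    _ ≤ (1+16*(u*v)) * (Real.sin (π*u) * Real.sin (π*v)) :=
        mul_le_mul_of_nonneg_left hab h16

end Auxiliary

set_option maxHeartbeats 1000000 in
theorem stmt7 (L : ℕ) (hL : 1 ≤ L) :
    ∀ ω ∈ Set.Icc (0 : ℝ) (1 / 2), 4 * (L : ℝ) ^ 2 * ω ^ 2 ≠ 1 →
      ‖Gfun L ω‖ ≤
        (2 / Real.pi) * (L : ℝ) / |1 - 4 * (L : ℝ) ^ 2 * ω ^ 2| + 8 / (Real.pi * L) := by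
  intro ω hω hne
  obtain ⟨hω0, hω2⟩ := hω
  have hpi := Real.pi_pos
  have hL0 : (0:ℝ) < (L:ℝ) := by exact_mod_cast hL
  have hMpos : 0 < |1 - 4*(L:ℝ)^2*ω^2| := abs_pos.2 (sub_ne_zero.mpr (Ne.symm hne))
  have h8 : 0 < 8/(π*(L:ℝ)) := by positivity
  rcases le_or_gt (4*(L:ℝ)^2*ω^2) 2 with hsmall | hbig
  · -- trivial branch
    have hM1 : |1 - 4*(L:ℝ)^2*ω^2| ≤ 1 := by
      rw [abs_le]
      constructor <;> nlinarith [sq_nonneg ((L:ℝ)*ω), sq_nonneg ω]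
    have htriv := G_trivial' L hL ω
    have hmain : 2*(L:ℝ)/π ≤ (2/π)*(L:ℝ)/|1 - 4*(L:ℝ)^2*ω^2| := by
      rw [le_div_iff₀ hMpos]
      calc 2*(L:ℝ)/π * |1 - 4*(L:ℝ)^2*ω^2| ≤ 2*(L:ℝ)/π * 1 := by
            apply mul_le_mul_of_nonneg_left hM1 (by positivity)
        _ = (2/π)*(L:ℝ) := by ring
    linarith
  · -- sharp branch
    have h2Lω : 1 < 2*(L:ℝ)*ω := by nlinarith [mul_nonneg hL0.le hω0]
    have hω0' : 0 < ω := by nlinarith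
    rcases lt_or_ge L 3 with hL3 | hL3
    · -- L = 1 or 2
      interval_cases L
      · exfalso
        norm_num at hbig
        nlinarith
      · have htriv := G_trivial' 2 (by norm_num) ω
        have hmain : (0:ℝ) ≤ (2/π)*((2:ℕ):ℝ)/|1 - 4*((2:ℕ):ℝ)^2*ω^2| := by positivity
        push_cast at htriv hmain ⊢
        have : (8:ℝ)/(π*2) = 2*2/π := by ring
        linarith
    · -- L ≥ 3
      have hL3' : (3:ℝ) ≤ (L:ℝ) := by exact_mod_cast hL3
      have h2L : (0:ℝ) < 2*(L:ℝ) := by positivity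
      set u : ℝ := ω + 1/(2*(L:ℝ)) with hudef
      set v : ℝ := ω - 1/(2*(L:ℝ)) with hvdef
      have hupos : 0 < u := by rw [hudef]; positivity
      have hvpos : 0 < v := by
        rw [hvdef, sub_pos, div_lt_iff₀ h2L]
        nlinarith
      have hvu : v ≤ u := by rw [hudef, hvdef]; nlinarith [one_div_pos.2 h2L]
      have hduv : u - v = 1/(L:ℝ) := by
        rw [hudef, hvdef]
        field_simp
        norm_num
      have hult1 : u < 1 := by
        rw [hudef]
        have : 1/(2*(L:ℝ)) ≤ 1/6 := by
          rw [div_le_div_iff₀ h2L (by norm_num)]; linarith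
        linarith
      have hvlt1 : v < 1 := lt_of_le_of_lt hvu hult1
      have huvpos : 0 < u*v := mul_pos hupos hvpos
      have hMeq2 : 4*(L:ℝ)^2*(u*v) = 4*(L:ℝ)^2*ω^2 - 1 := by
        rw [hudef, hvdef]; field_simp; ring
      have hMeq : |1 - 4*(L:ℝ)^2*ω^2| = 4*(L:ℝ)^2*(u*v) := by
        rw [show (1 : ℝ) - 4*(L:ℝ)^2*ω^2 = -(4*(L:ℝ)^2*(u*v)) by rw [hMeq2]; ring,
          abs_neg]
        exact abs_of_pos (by positivity)
      have hsinu : 0 < Real.sin (π*u) :=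
        Real.sin_pos_of_pos_of_lt_pi (by positivity) (by nlinarith)
      have hsinv : 0 < Real.sin (π*v) :=
        Real.sin_pos_of_pos_of_lt_pi (by positivity) (by nlinarith)
      have hΔeq : Real.cos (2*π*ω) - Real.cos (π/(L:ℝ))
          = -(2*Real.sin (π*u)*Real.sin (π*v)) := by
        rw [Real.cos_sub_cos,
          show (2*π*ω + π/(L:ℝ))/2 = π*u by rw [hudef]; field_simp,
          show (2*π*ω - π/(L:ℝ))/2 = π*v by rw [hvdef]; field_simp]
        ring
      have hΔne : Real.cos (2*π*ω) ≠ Real.cos (π/(L:ℝ)) := by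
        intro h
        have h0 : Real.cos (2*π*ω) - Real.cos (π/(L:ℝ)) = 0 := sub_eq_zero.mpr h
        rw [hΔeq] at h0
        nlinarith [mul_pos hsinu hsinv]
      have hGb := G_bound' L hL ω hΔne
      have habs : |Real.cos (2*π*ω) - Real.cos (π/(L:ℝ))|
          = 2*Real.sin (π*u)*Real.sin (π*v) := by
        rw [hΔeq, abs_neg]
        exact abs_of_pos (mul_pos (mul_pos two_pos hsinu) hsinv)
      rw [habs] at hGb
      -- main inequality
      have hmainineq : π^2*(u*v) ≤ (1+16*(u*v)) * (Real.sin (π*u) * Real.sin (π*v)) := by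
        rcases le_or_gt u (1/2) with hcase | hcase
        · apply ineq_a' hvpos hvu hcase
          · rw [hduv, div_le_div_iff₀ hL0 (by norm_num)]; linarith
          · have h1 : 1 ≤ 4*(L:ℝ)^2*(u*v) := by rw [hMeq2]; linarith
            rw [hduv, div_pow, one_pow, div_le_iff₀ (by positivity)]
            nlinarith
        · exact ineq_b' L hL3 hvpos hduv hcase.le
            (by rw [hudef, hvdef]; ring_nf; linarith)
      -- final arithmetic
      rw [hMeq]
      have hsinφle : Real.sin (π/(L:ℝ)) ≤ π/(L:ℝ) := Real.sin_le (by positivity)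
      have hRHSeq : (2/π)*(L:ℝ)/(4*(L:ℝ)^2*(u*v)) + 8/(π*(L:ℝ))
          = (1+16*(u*v))/(2*π*(L:ℝ)*(u*v)) := by
        field_simp
        ring
      rw [hRHSeq]
      refine hGb.trans ?_
      rw [div_le_div_iff₀ (by positivity) (by positivity)]
      calc Real.sin (π/(L:ℝ)) * (2*π*(L:ℝ)*(u*v))
          ≤ (π/(L:ℝ)) * (2*π*(L:ℝ)*(u*v)) := by
            apply mul_le_mul_of_nonneg_right hsinφle (by positivity)
        _ = 2*(π^2*(u*v)) := by field_simp
        _ ≤ 2*((1+16*(u*v)) * (Real.sin (π*u) * Real.sin (π*v))) := by linarith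
        _ = (1+16*(u*v)) * (2*Real.sin (π*u)*Real.sin (π*v)) := by ring
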